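/- Let F be a field, n ≥ 2, and let x₁,…,xₙ, b₁,…,b_{n−1} ∈ F be such that x_k + b_α ≠ 0 for all k and α. Let M be the n×n matrix whose first row is (1,1,…,1) and whose (α+1)-st row (for 1 ≤ α ≤ n−1) has entries M_{α+1,k} = 1/(x_k + b_α). Then det M = [∏_{1≤k<l≤n}(x_k − x_l) · ∏_{1≤α<β≤n−1}(b_α − b_β)] / ∏_{1≤k≤n, 1≤α≤n−1}(x_k + b_α). -/

import Mathlib

open Finset

section Aux

variable {F : Type*} [Field F]

/-- The ones-row variant determinant, assuming the Cauchy determinant formula in size `n`. -/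
lemma variant_aux (n : ℕ)
    (hc : ∀ u v : Fin n → F, (∀ i j, u i + v j ≠ 0) →
      (Matrix.of fun i j => (u i + v j)⁻¹).det
        = (∏ i : Fin n, ∏ j ∈ Ioi i, (u i - u j)) *
            (∏ i : Fin n, ∏ j ∈ Ioi i, (v i - v j)) /
          ∏ i : Fin n, ∏ j : Fin n, (u i + v j))
    (x : Fin (n + 1) → F) (b : Fin n → F)
    (hxb : ∀ k α, x k + b α ≠ 0) :
    (Matrix.of fun i k : Fin (n + 1) =>
        Fin.cases (motive := fun _ => F) 1 (fun α => (x k + b α)⁻¹) i).det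
      = (∏ k : Fin (n + 1), ∏ l ∈ Ioi k, (x k - x l)) *
          (∏ α : Fin n, ∏ β ∈ Ioi α, (b α - b β)) /
        ∏ k : Fin (n + 1), ∏ α : Fin n, (x k + b α) := by
  set r : Fin (n + 1) → F := Fin.cases 1 (fun α => (x 0 + b α)⁻¹) with hr
  set s : Fin (n + 1) → F := fun k => if k = 0 then 1 else x 0 - x k with hs
  set N : Matrix (Fin (n + 1)) (Fin (n + 1)) F :=
    Matrix.of fun i k => Fin.cases (motive := fun _ => F)
      (if k = 0 then 1 else 0) (fun α => if k = 0 then 1 else (x k + b α)⁻¹) i with hN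
  set C : Matrix (Fin (n + 1)) (Fin (n + 1)) F :=
    Matrix.of fun i k => r i * (s k * N i k) with hC
  have step1 : (Matrix.of fun i k : Fin (n + 1) =>
      Fin.cases (motive := fun _ => F) 1 (fun α => (x k + b α)⁻¹) i).det = C.det := by
    rw [← Matrix.det_transpose, ← Matrix.det_transpose C]
    apply Matrix.det_eq_of_forall_row_eq_smul_add_const
      (c := fun k : Fin (n + 1) => if k = 0 then 0 else 1) 0 (by simp)
    intro k i
    simp only [Matrix.transpose_apply, hC, hN, Matrix.of_apply]
    induction i using Fin.cases with
    | zero =>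
      rcases eq_or_ne k 0 with rfl | hk
      · simp [hr, hs]
      · simp [hr, hs, hk]
    | succ α =>
      rcases eq_or_ne k 0 with rfl | hk
      · simp [hr, hs]
      · simp only [hk, if_neg hk, Fin.cases_succ, hr, hs]
        simp only [↓reduceIte]
        have h1 := hxb k α
        have h2 := hxb 0 α
        field_simp
        ring
  have step2 : C.det = (∏ i, r i) * ((∏ k, s k) * N.det) := by
    have e : C = Matrix.of fun i k => r i * (Matrix.of fun i k => s k * N i k) i k := rfl
    rw [e, Matrix.det_mul_column, Matrix.det_mul_row]
  have step3 : N.det = (Matrix.of fun α k : Fin n => (b α + x k.succ)⁻¹).det := by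
    rw [Matrix.det_succ_row_zero, Fin.sum_univ_succ]
    have h0 : ∀ j : Fin n, N 0 j.succ = 0 := by
      intro j; simp [hN, Fin.succ_ne_zero]
    simp only [h0, mul_zero, zero_mul, Finset.sum_const_zero, add_zero]
    have : N 0 0 = 1 := by simp [hN]
    rw [this]
    simp only [Fin.val_zero, pow_zero, one_mul, Fin.succAbove_zero]
    congr 1
    ext α k
    simp [hN, Fin.succ_ne_zero, add_comm]
  have step4 : (Matrix.of fun α k : Fin n => (b α + x k.succ)⁻¹).det
      = (∏ α : Fin n, ∏ β ∈ Ioi α, (b α - b β)) *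
          (∏ k : Fin n, ∏ l ∈ Ioi k, (x k.succ - x l.succ)) /
        ∏ α : Fin n, ∏ k : Fin n, (b α + x k.succ) := by
    exact hc b (fun k => x k.succ) (fun α k => by rw [add_comm]; exact hxb k.succ α)
  -- product computations
  have hprodr : (∏ i, r i) = (∏ α : Fin n, (x 0 + b α))⁻¹ := by
    rw [Fin.prod_univ_succ]
    simp [hr, Finset.prod_inv_distrib]
  have hprods : (∏ k, s k) = ∏ k : Fin n, (x 0 - x k.succ) := by
    rw [Fin.prod_univ_succ]
    simp [hs, Fin.succ_ne_zero]
  have hxsplit : (∏ k : Fin (n + 1), ∏ l ∈ Ioi k, (x k - x l))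
      = (∏ l : Fin n, (x 0 - x l.succ)) *
        ∏ k : Fin n, ∏ l ∈ Ioi k, (x k.succ - x l.succ) := by
    rw [Fin.prod_univ_succ, Fin.prod_Ioi_zero]
    congr 1
    exact Finset.prod_congr rfl fun k _ => Fin.prod_Ioi_succ (fun l => x k.succ - x l) k
  have hdsplit : (∏ k : Fin (n + 1), ∏ α : Fin n, (x k + b α))
      = (∏ α : Fin n, (x 0 + b α)) * ∏ k : Fin n, ∏ α : Fin n, (x k.succ + b α) := by
    rw [Fin.prod_univ_succ]
  have hdcomm : (∏ α : Fin n, ∏ k : Fin n, (b α + x k.succ))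
      = ∏ k : Fin n, ∏ α : Fin n, (x k.succ + b α) := by
    rw [Finset.prod_comm]
    exact Finset.prod_congr rfl fun k _ => Finset.prod_congr rfl fun α _ => add_comm _ _
  rw [step1, step2, step3, step4, hprodr, hprods, hxsplit, hdsplit, hdcomm]
  rw [div_eq_mul_inv, div_eq_mul_inv, mul_inv]
  ring

/-- The Cauchy determinant. -/
lemma cauchy_aux : ∀ (n : ℕ) (u v : Fin n → F), (∀ i j, u i + v j ≠ 0) →
    (Matrix.of fun i j => (u i + v j)⁻¹).det
      = (∏ i : Fin n, ∏ j ∈ Ioi i, (u i - u j)) *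
          (∏ i : Fin n, ∏ j ∈ Ioi i, (v i - v j)) /
        ∏ i : Fin n, ∏ j : Fin n, (u i + v j) := by
  intro n
  induction n with
  | zero => intro u v _; simp [Matrix.det_fin_zero]
  | succ n ih =>
    intro u v huv
    set r : Fin (n + 1) → F := Fin.cases 1 (fun α => u 0 - u α.succ) with hr
    set s : Fin (n + 1) → F := fun j => (u 0 + v j)⁻¹ with hs
    set V : Matrix (Fin (n + 1)) (Fin (n + 1)) F :=
      Matrix.of fun i j => Fin.cases (motive := fun _ => F)
        1 (fun α => (v j + u α.succ)⁻¹) i with hV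
    set C : Matrix (Fin (n + 1)) (Fin (n + 1)) F :=
      Matrix.of fun i j => r i * (s j * V i j) with hC
    have step1 : (Matrix.of fun i j : Fin (n + 1) => (u i + v j)⁻¹).det = C.det := by
      apply Matrix.det_eq_of_forall_row_eq_smul_add_const
        (c := fun i : Fin (n + 1) => if i = 0 then 0 else 1) 0 (by simp)
      intro i j
      simp only [hC, hV, Matrix.of_apply]
      induction i using Fin.cases with
      | zero => simp [hr, hs]
      | succ α =>
        simp only [Fin.cases_succ, Fin.cases_zero, hr, hs, Fin.succ_ne_zero, if_neg]
        simp only [↓reduceIte]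
        have h1 := huv 0 j
        have h2 := huv α.succ j
        have h2' : v j + u α.succ ≠ 0 := by rw [add_comm]; exact h2
        field_simp
        ring
    have step2 : C.det = (∏ i, r i) * ((∏ j, s j) * V.det) := by
      have e : C = Matrix.of fun i j => r i * (Matrix.of fun i j => s j * V i j) i j := rfl
      rw [e, Matrix.det_mul_column, Matrix.det_mul_row]
    have step3 : V.det
        = (∏ j : Fin (n + 1), ∏ l ∈ Ioi j, (v j - v l)) *
            (∏ α : Fin n, ∏ β ∈ Ioi α, (u α.succ - u β.succ)) /
          ∏ j : Fin (n + 1), ∏ α : Fin n, (v j + u α.succ) := by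
      exact variant_aux n ih v (fun α => u α.succ)
        (fun j α => by rw [add_comm]; exact huv α.succ j)
    have hprodr : (∏ i, r i) = ∏ α : Fin n, (u 0 - u α.succ) := by
      rw [Fin.prod_univ_succ]; simp [hr]
    have hprods : (∏ j, s j) = (∏ j : Fin (n + 1), (u 0 + v j))⁻¹ := by
      simp [hs, Finset.prod_inv_distrib]
    have husplit : (∏ i : Fin (n + 1), ∏ j ∈ Ioi i, (u i - u j))
        = (∏ j : Fin n, (u 0 - u j.succ)) *
          ∏ i : Fin n, ∏ j ∈ Ioi i, (u i.succ - u j.succ) := by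
      rw [Fin.prod_univ_succ, Fin.prod_Ioi_zero]
      congr 1
      exact Finset.prod_congr rfl fun i _ => Fin.prod_Ioi_succ (fun j => u i.succ - u j) i
    have hdsplit : (∏ i : Fin (n + 1), ∏ j : Fin (n + 1), (u i + v j))
        = (∏ j : Fin (n + 1), (u 0 + v j)) *
          ∏ i : Fin n, ∏ j : Fin (n + 1), (u i.succ + v j) := by
      rw [Fin.prod_univ_succ]
    have hdcomm : (∏ j : Fin (n + 1), ∏ α : Fin n, (v j + u α.succ))
        = ∏ i : Fin n, ∏ j : Fin (n + 1), (u i.succ + v j) := by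
      rw [Finset.prod_comm]
      exact Finset.prod_congr rfl fun i _ => Finset.prod_congr rfl fun j _ => add_comm _ _
    have hIoi : (∏ i : Fin (n + 1), ∏ j ∈ Ioi i, (u i - u j))
        = (∏ j : Fin n, (u 0 - u j.succ)) *
          ∏ α : Fin n, ∏ β ∈ Ioi α, (u α.succ - u β.succ) := husplit
    rw [step1, step2, step3, hprodr, hprods, hIoi, hdsplit, hdcomm]
    rw [div_eq_mul_inv, div_eq_mul_inv, mul_inv]
    ring

end Aux

/-- Variant of the Cauchy determinant in which one row is replaced by a row of ones:
for an `(n+1)×(n+1)` matrix (`n ≥ 1`) whose first row is `(1,…,1)` and whose row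
indexed by `α` has entries `1/(x_k + b_α)`,
`det M = ∏_{k<l}(x_k − x_l) · ∏_{α<β}(b_α − b_β) / ∏_{k,α}(x_k + b_α)`. -/
theorem stmt_14 {F : Type*} [Field F] (n : ℕ) (hn : 1 ≤ n)
    (x : Fin (n + 1) → F) (b : Fin n → F)
    (hxb : ∀ k α, x k + b α ≠ 0) :
    (Matrix.of fun i k : Fin (n + 1) =>
        Fin.cases (motive := fun _ => F) 1 (fun α => (x k + b α)⁻¹) i).det
      = (∏ k : Fin (n + 1), ∏ l ∈ Ioi k, (x k - x l)) *
          (∏ α : Fin n, ∏ β ∈ Ioi α, (b α - b β)) /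
        ∏ k : Fin (n + 1), ∏ α : Fin n, (x k + b α) := by
  exact variant_aux n (fun u v h => cauchy_aux n u v h) x b hxb
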